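/- Let W be the real vector space of n×n Hermitian complex matrices and let ξ ∈ W satisfy Tr(ξ) = 1. Let f, g : W → ℝ be functions differentiable at ξ, and suppose f vanishes on the whole affine hyperplane {η ∈ W : Tr(η) = 1}. Let F, G ∈ W be matrices representing the derivatives at ξ, i.e. Df(ξ)(η) = Tr(Fη) and Dg(ξ)(η) = Tr(Gη) for all η ∈ W. Then Tr(ξ·[[F, G]]) = 0. (This is the statement that the ideal of functions vanishing on the trace-one hyperplane is an ideal for the Poisson bracket {f, g}(ξ) = Tr(ξ·[[F, G]]) associated with the Lie bivector Λ̃, so the bracket reduces to the hyperplane.) -/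

import Mathlib

open Matrix

attribute [local instance] Matrix.frobeniusNormedAddCommGroup Matrix.frobeniusNormedSpace

/-- The Lie product of two complex matrices: `[[x, y]] = (i/2)(xy − yx)`. -/
noncomputable def lieProd {n : ℕ} (x y : Matrix (Fin n) (Fin n) ℂ) :
    Matrix (Fin n) (Fin n) ℂ :=
  (Complex.I / 2) • (x * y - y * x)

/-- On the real vector space of Hermitian matrices, if `f` vanishes on the affine
hyperplane of trace-one Hermitian matrices, `ξ` is a trace-one Hermitian point, and the
derivatives of `f` and `g` at `ξ` are represented via the trace pairing by Hermitian
matrices `F` and `G`, then `Tr(ξ·[[F, G]]) = 0`: the ideal of functions vanishing on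
the trace-one hyperplane is an ideal for the Poisson bracket
`{f, g}(ξ) = Tr(ξ·[[F, G]])`, so the bracket reduces to the hyperplane. -/
theorem poisson_bracket_reduces {n : ℕ}
    (ξ : Matrix (Fin n) (Fin n) ℂ) (hξ : ξ.IsHermitian) (hξtr : ξ.trace = 1)
    (f g : Matrix (Fin n) (Fin n) ℂ → ℝ)
    (hf : DifferentiableAt ℝ f ξ) (hg : DifferentiableAt ℝ g ξ)
    (hfvan : ∀ η : Matrix (Fin n) (Fin n) ℂ, η.IsHermitian → η.trace = 1 → f η = 0)
    (F G : Matrix (Fin n) (Fin n) ℂ) (hF : F.IsHermitian) (hG : G.IsHermitian)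
    (hdf : ∀ η : Matrix (Fin n) (Fin n) ℂ, η.IsHermitian →
      fderiv ℝ f ξ η = (Matrix.trace (F * η)).re)
    (hdg : ∀ η : Matrix (Fin n) (Fin n) ℂ, η.IsHermitian →
      fderiv ℝ g ξ η = (Matrix.trace (G * η)).re) :
    Matrix.trace (ξ * lieProd F G) = 0 := by
  -- Step 1: derivative of f vanishes in traceless Hermitian directions
  have hkey : ∀ η : Matrix (Fin n) (Fin n) ℂ, η.IsHermitian → η.trace = 0 →
      Matrix.trace (F * η) = 0 := by
    intro η hη htr
    have hφ : HasDerivAt (fun t : ℝ => ξ + t • η) η 0 := by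
      have h1 := ((hasDerivAt_id (0 : ℝ)).smul_const η).const_add ξ
      simp only [id, one_smul] at h1
      exact h1
    have hcomp : HasDerivAt (fun t : ℝ => f (ξ + t • η)) (fderiv ℝ f ξ η) 0 := by
      have hfd : HasFDerivAt f (fderiv ℝ f ξ) (ξ + (0 : ℝ) • η) := by
        simpa using hf.hasFDerivAt
      exact hfd.comp_hasDerivAt 0 hφ
    have hzero : (fun t : ℝ => f (ξ + t • η)) = fun _ => 0 := by
      funext t
      apply hfvan
      · exact hξ.add (by
          unfold Matrix.IsHermitian
          rw [Matrix.conjTranspose_smul, hη.eq]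
          simp)
      · simp [Matrix.trace_add, Matrix.trace_smul, hξtr, htr]
    have hderiv0 : fderiv ℝ f ξ η = 0 := by
      have h0 : HasDerivAt (fun t : ℝ => f (ξ + t • η)) 0 0 := by
        rw [hzero]; exact hasDerivAt_const _ _
      exact hcomp.unique h0
    have hre : (Matrix.trace (F * η)).re = 0 := by
      rw [← hdf η hη]; exact hderiv0
    have hreal : (starRingEnd ℂ) (Matrix.trace (F * η)) = Matrix.trace (F * η) :=
      calc (starRingEnd ℂ) (Matrix.trace (F * η))
          = Matrix.trace ((F * η)ᴴ) := (Matrix.trace_conjTranspose _).symm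
        _ = Matrix.trace (η * F) := by rw [Matrix.conjTranspose_mul, hF.eq, hη.eq]
        _ = Matrix.trace (F * η) := Matrix.trace_mul_comm _ _
    have him : (Matrix.trace (F * η)).im = 0 := by
      have := congrArg Complex.im hreal
      simp [Complex.conj_im] at this
      linarith
    exact Complex.ext hre him
  -- Step 2: apply to η = lieProd G ξ
  set η : Matrix (Fin n) (Fin n) ℂ := lieProd G ξ with hηdef
  have hηherm : η.IsHermitian := by
    unfold Matrix.IsHermitian
    unfold η
    unfold lieProd
    rw [Matrix.conjTranspose_smul, Matrix.conjTranspose_sub, Matrix.conjTranspose_mul,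
      Matrix.conjTranspose_mul, hG.eq, hξ.eq]
    have hstar : (star (Complex.I / 2) : ℂ) = -(Complex.I / 2) := by
      simp [Complex.ext_iff]; norm_num
    rw [hstar, neg_smul, smul_sub, neg_sub, smul_sub]
  have hηtr : η.trace = 0 := by
    unfold η
    unfold lieProd
    rw [Matrix.trace_smul, Matrix.trace_sub, Matrix.trace_mul_comm]
    simp
  have h0 := hkey η hηherm hηtr
  -- Step 3: trace(ξ * lieProd F G) = trace(F * lieProd G ξ)
  have heq : Matrix.trace (ξ * lieProd F G) = Matrix.trace (F * η) := by
    unfold η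
    unfold lieProd
    rw [Matrix.mul_smul, Matrix.mul_smul, Matrix.trace_smul, Matrix.trace_smul,
      Matrix.mul_sub, Matrix.mul_sub, Matrix.trace_sub, Matrix.trace_sub]
    rw [← Matrix.mul_assoc, ← Matrix.mul_assoc, ← Matrix.mul_assoc, ← Matrix.mul_assoc]
    rw [Matrix.trace_mul_cycle ξ F G, Matrix.trace_mul_cycle ξ G F,
      Matrix.trace_mul_cycle G ξ F]
  rw [heq, h0]
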